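/- Let r be i.i.d. Bernoulli(γ) on [m]×[n], M the block-expanded mask with block size b = 2k+1, m,n > 2b, and p = E[Σ_{i,j} M_{i,j}]/(mn) the expected fraction of dropped units. Then p = (1-2k/m)(1-2k/n)(1-(1-γ)^{(2k+1)^2}) + (4/(mn))(k² - Σ_{1≤i,j≤k}(1-γ)^{(k+i)(k+j)}) + 2(1/m + 1/n - 4k/(mn))·(k - (1-γ)^{(2k+1)(k+1)}(1-(1-γ)^{(2k+1)k})/(1-(1-γ)^{2k+1})). -/

import Mathlib

open MeasureTheory

/-- Product measure on an `m × n` grid of i.i.d. Bernoulli(γ) Boolean entries. -/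
noncomputable def gridMeasure (m n : ℕ) (γ : ENNReal) (hγ : γ ≤ 1) :
    Measure ((Fin m × Fin n) → Bool) :=
  Measure.pi fun _ => (PMF.bernoulli γ.toNNReal
    (by simpa using ENNReal.toNNReal_mono ENNReal.one_ne_top hγ)).toMeasure

/-- `maskOn m n k r i j` says the block-expanded mask `M` has a `1` at the (1-based)
grid position `(i, j)`: some grid entry `r` within Chebyshev distance `k` equals `1`. -/
def maskOn (m n k : ℕ) (r : (Fin m × Fin n) → Bool) (i j : ℕ) : Prop :=
  ∃ i' j' : ℕ, ∃ (h1 : 1 ≤ i') (h2 : i' ≤ m) (h3 : 1 ≤ j') (h4 : j' ≤ n),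
    |(i' : ℤ) - (i : ℤ)| ≤ (k : ℤ) ∧ |(j' : ℤ) - (j : ℤ)| ≤ (k : ℤ) ∧
    r (⟨i' - 1, by omega⟩, ⟨j' - 1, by omega⟩) = true

open scoped Classical

/-! ### Auxiliary lemmas -/

instance gridMeasure.isProbabilityMeasure (m n : ℕ) (γ : ENNReal) (hγ : γ ≤ 1) :
    IsProbabilityMeasure (gridMeasure m n γ hγ) := by
  unfold gridMeasure; infer_instance

lemma prob_all_false (m n : ℕ) (γ : ENNReal) (hγ : γ ≤ 1) (W : Finset (Fin m × Fin n)) :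
    gridMeasure m n γ hγ {r | ∀ p ∈ W, r p = false} = (1 - γ) ^ W.card := by
  have hset : {r : (Fin m × Fin n) → Bool | ∀ p ∈ W, r p = false}
      = Set.univ.pi (fun p => if p ∈ W then ({false} : Set Bool) else Set.univ) := by
    ext r
    simp only [Set.mem_setOf_eq, Set.mem_pi, Set.mem_univ, forall_true_left]
    constructor
    · intro h p
      by_cases hp : p ∈ W
      · simp [hp, h p hp]
      · simp [hp]
    · intro h p hp
      have := h p; simpa [hp] using this
  rw [hset, gridMeasure, Measure.pi_pi]
  have hb : ∀ p : Fin m × Fin n,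
      (PMF.bernoulli γ.toNNReal
        (by simpa using ENNReal.toNNReal_mono ENNReal.one_ne_top hγ)).toMeasure (if p ∈ W then ({false} : Set Bool) else Set.univ)
      = if p ∈ W then 1 - γ else 1 := by
    intro p
    by_cases hp : p ∈ W
    · simp only [hp, if_true]
      rw [PMF.toMeasure_apply_singleton _ _ (measurableSet_singleton _)]
      simp only [PMF.bernoulli, PMF.ofFintype_apply, cond_false]
      simp [ENNReal.coe_sub, ENNReal.coe_toNNReal (ne_top_of_le_ne_top ENNReal.one_ne_top hγ)]
    · simp only [hp, if_false]
      exact measure_univ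
  simp_rw [hb]
  rw [← Finset.prod_filter, Finset.filter_univ_mem, Finset.prod_const]

noncomputable def rowW (m k i : ℕ) : Finset (Fin m) :=
  Finset.univ.filter (fun a => |((a : ℕ) : ℤ) + 1 - i| ≤ (k : ℤ))

lemma mem_rowW (m k i : ℕ) (a : Fin m) :
    a ∈ rowW m k i ↔ |((a : ℕ) : ℤ) + 1 - i| ≤ (k : ℤ) := by
  simp [rowW]

lemma maskOn_iff (m n k : ℕ) (r : (Fin m × Fin n) → Bool) (i j : ℕ) :
    maskOn m n k r i j ↔ ∃ p ∈ rowW m k i ×ˢ rowW n k j, r p = true := by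
  constructor
  · rintro ⟨i', j', h1, h2, h3, h4, hi, hj, hr⟩
    refine ⟨(⟨i' - 1, by omega⟩, ⟨j' - 1, by omega⟩), ?_, hr⟩
    rw [Finset.mem_product, mem_rowW, mem_rowW]
    simp only [abs_le] at *
    constructor <;> omega
  · rintro ⟨⟨a, b⟩, hp, hr⟩
    rw [Finset.mem_product, mem_rowW, mem_rowW] at hp
    obtain ⟨ha, hb⟩ := hp
    refine ⟨(a : ℕ) + 1, (b : ℕ) + 1, by omega, by omega, by omega, by omega, ?_, ?_, ?_⟩
    · rw [abs_le] at *; push_cast; push_cast at ha; omega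
    · rw [abs_le] at *; push_cast; push_cast at hb; omega
    · exact hr

/-- `cW m k i` : the number of grid rows within distance `k` of row `i`. -/
def cW (m k i : ℕ) : ℕ := min (i + k) m - max (i - k) 1 + 1

lemma rowW_card (m k i : ℕ) (h1 : 1 ≤ i) (h2 : i ≤ m) :
    (rowW m k i).card = cW m k i := by
  have hcard : (rowW m k i).card = (Finset.Icc (max (i - k) 1) (min (i + k) m)).card := by
    refine Finset.card_bij (fun a _ => (a : ℕ) + 1) ?_ ?_ ?_
    · intro a ha
      rw [mem_rowW, abs_le] at ha
      have := a.isLt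
      simp only [Finset.mem_Icc]
      omega
    · intro a ha b hb h
      exact Fin.ext (by omega)
    · intro b hb
      simp only [Finset.mem_Icc] at hb
      refine ⟨⟨b - 1, by omega⟩, ?_, ?_⟩
      · rw [mem_rowW, abs_le]
        push_cast
        omega
      · simp only []
        omega
  rw [hcard, Nat.card_Icc]
  unfold cW
  omega

lemma sum_cW (m k : ℕ) (hk : 1 ≤ k) (hm : 2 * (2 * k + 1) < m) (f : ℕ → ENNReal) :
    ∑ i ∈ Finset.Icc 1 m, f (cW m k i)
      = (m - 2 * k : ℕ) * f (2 * k + 1) + 2 * ∑ i ∈ Finset.Icc 1 k, f (k + i) := by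
  have hsplit : Finset.Icc 1 m
      = (Finset.Icc 1 k ∪ Finset.Icc (k + 1) (m - k)) ∪ Finset.Icc (m - k + 1) m := by
    ext x
    simp only [Finset.mem_union, Finset.mem_Icc]
    omega
  have hd1 : Disjoint (Finset.Icc 1 k) (Finset.Icc (k + 1) (m - k)) := by
    rw [Finset.disjoint_left]
    intro x hx hx'
    simp only [Finset.mem_Icc] at *
    omega
  have hd2 : Disjoint (Finset.Icc 1 k ∪ Finset.Icc (k + 1) (m - k)) (Finset.Icc (m - k + 1) m) := by
    rw [Finset.disjoint_left]
    intro x hx hx'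
    simp only [Finset.mem_union, Finset.mem_Icc] at *
    omega
  rw [hsplit, Finset.sum_union hd2, Finset.sum_union hd1]
  have e1 : ∑ i ∈ Finset.Icc 1 k, f (cW m k i) = ∑ i ∈ Finset.Icc 1 k, f (k + i) := by
    refine Finset.sum_congr rfl fun i hi => ?_
    simp only [Finset.mem_Icc] at hi
    congr 1
    unfold cW
    omega
  have e2 : ∑ i ∈ Finset.Icc (k + 1) (m - k), f (cW m k i)
      = (m - 2 * k : ℕ) * f (2 * k + 1) := by
    rw [Finset.sum_congr rfl (fun i hi => ?_), Finset.sum_const, Nat.card_Icc, nsmul_eq_mul]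
    · congr 1
      rw [Nat.cast_inj]
      omega
    · simp only [Finset.mem_Icc] at hi
      congr 1
      unfold cW
      omega
  have e3 : ∑ i ∈ Finset.Icc (m - k + 1) m, f (cW m k i) = ∑ i ∈ Finset.Icc 1 k, f (k + i) := by
    refine Finset.sum_nbij' (fun i => m + 1 - i) (fun i => m + 1 - i) ?_ ?_ ?_ ?_ ?_
    · intro a ha; simp only [Finset.mem_Icc] at *; omega
    · intro a ha; simp only [Finset.mem_Icc] at *; omega
    · intro a ha; simp only [Finset.mem_Icc] at *; omega
    · intro a ha; simp only [Finset.mem_Icc] at *; omega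
    · intro a ha
      simp only [Finset.mem_Icc] at ha
      congr 1
      unfold cW
      omega
  rw [e1, e2, e3]
  ring

lemma geom_ennreal (x : ENNReal) (hx : x < 1) (N : ℕ) :
    (1 - x ^ N) / (1 - x) = ∑ i ∈ Finset.range N, x ^ i := by
  have hx1 : 1 - x ≠ 0 := by
    simp only [ne_eq, tsub_eq_zero_iff_le, not_le]
    exact hx
  have hxt : 1 - x ≠ ⊤ := ne_top_of_le_ne_top (by simp) tsub_le_self
  induction N with
  | zero => simp
  | succ N ih =>
    rw [Finset.sum_range_succ, ← ih, eq_comm, ENNReal.eq_div_iff hx1 hxt, mul_add,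
      mul_comm (1 - x), ENNReal.div_mul_cancel hx1 hxt, mul_comm (1 - x) (x ^ N),
      ENNReal.mul_sub (fun _ _ => ENNReal.pow_ne_top hx.ne_top), mul_one, ← pow_succ]
    exact tsub_add_tsub_cancel (pow_le_one₀ zero_le hx.le)
      (by rw [pow_succ]; exact mul_le_of_le_one_right' hx.le)

lemma G_eq (q : ENNReal) (hq : q < 1) (k : ℕ) :
    q ^ ((2 * k + 1) * (k + 1)) * (1 - q ^ ((2 * k + 1) * k)) / (1 - q ^ (2 * k + 1))
      = ∑ i ∈ Finset.Icc 1 k, q ^ ((2 * k + 1) * (k + i)) := by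
  have hx : q ^ (2 * k + 1) < 1 := pow_lt_one₀ zero_le hq (by omega)
  rw [mul_div_assoc, pow_mul q (2 * k + 1) k, geom_ennreal _ hx, Finset.mul_sum]
  refine Finset.sum_nbij' (fun i => i + 1) (fun i => i - 1) ?_ ?_ ?_ ?_ ?_
  · intro a ha; simp only [Finset.mem_range, Finset.mem_Icc] at *; omega
  · intro a ha; simp only [Finset.mem_range, Finset.mem_Icc] at *; omega
  · intro a ha; omega
  · intro a ha; simp only [Finset.mem_Icc] at ha; omega
  · intro a ha
    simp only [Finset.mem_range] at ha
    rw [← pow_mul, ← pow_add]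
    congr 1
    ring

lemma sum_one_sub {α : Type*} (s : Finset α) (g : α → ENNReal) (hg : ∀ a ∈ s, g a ≤ 1) :
    ∑ a ∈ s, (1 - g a) = (s.card : ENNReal) - ∑ a ∈ s, g a := by
  have hne : ∑ a ∈ s, g a ≠ ⊤ := by
    refine (lt_of_le_of_lt (Finset.sum_le_sum hg) ?_).ne
    rw [Finset.sum_const, nsmul_eq_mul, mul_one]
    exact ENNReal.natCast_lt_top _
  refine ENNReal.eq_sub_of_add_eq hne ?_
  rw [← Finset.sum_add_distrib]
  rw [Finset.sum_congr rfl (fun a ha => tsub_add_cancel_of_le (hg a ha)), Finset.sum_const,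
    nsmul_eq_mul, mul_one]

/-- Measure of the mask event at an interior-or-boundary cell. -/
lemma mask_measure (m n k : ℕ) (γ : ENNReal) (hγ : γ ≤ 1) (i j : ℕ)
    (hi1 : 1 ≤ i) (hi2 : i ≤ m) (hj1 : 1 ≤ j) (hj2 : j ≤ n) :
    gridMeasure m n γ hγ {r | maskOn m n k r i j}
      = 1 - (1 - γ) ^ (cW m k i * cW n k j) := by
  have hset : {r : (Fin m × Fin n) → Bool | maskOn m n k r i j}
      = {r | ∀ p ∈ rowW m k i ×ˢ rowW n k j, r p = false}ᶜ := by
    ext r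
    simp only [Set.mem_compl_iff, Set.mem_setOf_eq, maskOn_iff, not_forall]
    constructor
    · rintro ⟨p, hp, hr⟩
      exact ⟨p, hp, by simp [hr]⟩
    · rintro ⟨p, hp, hr⟩
      exact ⟨p, hp, by simpa using hr⟩
  rw [hset, prob_compl_eq_one_sub (Set.toFinite _).measurableSet, prob_all_false,
    Finset.card_product, rowW_card m k i hi1 hi2, rowW_card n k j hj1 hj2]

lemma ennreal_sub_add_sub (a b c d : ENNReal) (h1 : b ≤ a) (h2 : d ≤ c)
    (hb : b ≠ ⊤) (hd : d ≠ ⊤) : (a - b) + (c - d) = (a + c) - (b + d) := by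
  refine ENNReal.eq_sub_of_add_eq (by rw [Ne, ENNReal.add_eq_top]; tauto) ?_
  calc a - b + (c - d) + (b + d) = (a - b + b) + (c - d + d) := by ring
    _ = a + c := by rw [tsub_add_cancel_of_le h1, tsub_add_cancel_of_le h2]

/-- The p–γ relationship: the expected fraction `p` of dropped units over the whole
`m × n` grid equals the boundary-corrected closed-form expression. -/
theorem p_gamma_relationship (m n k : ℕ) (hk : 1 ≤ k)
    (hm : 2 * (2 * k + 1) < m) (hn : 2 * (2 * k + 1) < n)
    (γ : ENNReal) (hγ0 : γ ≠ 0) (hγ1 : γ < 1) :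
    (∫⁻ r, (∑ i ∈ Finset.Icc 1 m, ∑ j ∈ Finset.Icc 1 n,
        if maskOn m n k r i j then (1 : ENNReal) else 0)
          ∂(gridMeasure m n γ hγ1.le)) / ((m : ENNReal) * n)
      = (1 - 2 * k / (m : ENNReal)) * (1 - 2 * k / (n : ENNReal)) *
          (1 - (1 - γ) ^ ((2 * k + 1) ^ 2))
        + 4 * ((k ^ 2 : ENNReal) -
            ∑ i ∈ Finset.Icc 1 k, ∑ j ∈ Finset.Icc 1 k,
              (1 - γ) ^ ((k + i) * (k + j))) / ((m : ENNReal) * n)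
        + 2 * (1 / (m : ENNReal) + 1 / (n : ENNReal) - 4 * k / ((m : ENNReal) * n)) *
            ((k : ENNReal) - (1 - γ) ^ ((2 * k + 1) * (k + 1)) *
              (1 - (1 - γ) ^ ((2 * k + 1) * k)) / (1 - (1 - γ) ^ (2 * k + 1))) := by
  classical
  set q := 1 - γ with hqdef
  have hqle : q ≤ 1 := tsub_le_self
  have hq1 : q < 1 := ENNReal.sub_lt_self ENNReal.one_ne_top one_ne_zero hγ0
  have hm0 : (m : ENNReal) ≠ 0 := Nat.cast_ne_zero.mpr (by omega)
  have hmt : (m : ENNReal) ≠ ⊤ := ENNReal.natCast_ne_top m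
  have hn0 : (n : ENNReal) ≠ 0 := Nat.cast_ne_zero.mpr (by omega)
  have hnt : (n : ENNReal) ≠ ⊤ := ENNReal.natCast_ne_top n
  have hmeas : ∀ f : ((Fin m × Fin n) → Bool) → ENNReal, Measurable f :=
    fun f => measurable_of_finite f
  have hint : (∫⁻ r, (∑ i ∈ Finset.Icc 1 m, ∑ j ∈ Finset.Icc 1 n,
        if maskOn m n k r i j then (1 : ENNReal) else 0) ∂(gridMeasure m n γ hγ1.le))
      = ∑ i ∈ Finset.Icc 1 m, ∑ j ∈ Finset.Icc 1 n, (1 - q ^ (cW m k i * cW n k j)) := by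
    rw [lintegral_finset_sum _ (fun i _ => hmeas _)]
    refine Finset.sum_congr rfl fun i hi => ?_
    rw [lintegral_finset_sum _ (fun j _ => hmeas _)]
    refine Finset.sum_congr rfl fun j hj => ?_
    simp only [Finset.mem_Icc] at hi hj
    have hind : ∀ r, (if maskOn m n k r i j then (1:ENNReal) else 0)
        = Set.indicator {r | maskOn m n k r i j} 1 r := by
      intro r
      simp [Set.indicator_apply, Set.mem_setOf_eq]
    rw [lintegral_congr hind, lintegral_indicator_one (Set.toFinite _).measurableSet,
      mask_measure m n k γ hγ1.le i j hi.1 hi.2 hj.1 hj.2]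
  rw [hint]
  set G : ENNReal := ∑ i ∈ Finset.Icc 1 k, q ^ ((2 * k + 1) * (k + i)) with hGdef
  set D : ENNReal := ∑ i ∈ Finset.Icc 1 k, ∑ j ∈ Finset.Icc 1 k, q ^ ((k + i) * (k + j))
    with hDdef
  have hTsum : ∑ i ∈ Finset.Icc 1 m, ∑ j ∈ Finset.Icc 1 n, q ^ (cW m k i * cW n k j)
      = ((m - 2 * k : ℕ) * ((n - 2 * k : ℕ) * q ^ ((2 * k + 1) * (2 * k + 1)) + 2 * G)
        + 2 * ((n - 2 * k : ℕ) * G + 2 * D)) := by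
    have inner : ∀ a : ℕ, ∑ j ∈ Finset.Icc 1 n, q ^ (a * cW n k j)
        = (n - 2 * k : ℕ) * q ^ (a * (2 * k + 1)) + 2 * ∑ j ∈ Finset.Icc 1 k, q ^ (a * (k + j)) :=
      fun a => sum_cW n k hk hn (fun b => q ^ (a * b))
    calc ∑ i ∈ Finset.Icc 1 m, ∑ j ∈ Finset.Icc 1 n, q ^ (cW m k i * cW n k j)
        = ∑ i ∈ Finset.Icc 1 m, ((n - 2 * k : ℕ) * q ^ (cW m k i * (2 * k + 1))
            + 2 * ∑ j ∈ Finset.Icc 1 k, q ^ (cW m k i * (k + j))) :=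
          Finset.sum_congr rfl fun i _ => inner _
      _ = (n - 2 * k : ℕ) * ∑ i ∈ Finset.Icc 1 m, q ^ (cW m k i * (2 * k + 1))
            + 2 * ∑ i ∈ Finset.Icc 1 m, ∑ j ∈ Finset.Icc 1 k, q ^ (cW m k i * (k + j)) := by
          rw [Finset.sum_add_distrib, Finset.mul_sum, Finset.mul_sum]
      _ = (n - 2 * k : ℕ) * ((m - 2 * k : ℕ) * q ^ ((2 * k + 1) * (2 * k + 1)) + 2 * G)
            + 2 * ((m - 2 * k : ℕ) * G + 2 * D) := by
          congr 1
          · congr 1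
            rw [sum_cW m k hk hm (fun a => q ^ (a * (2 * k + 1)))]
            congr 1
            rw [hGdef, Finset.mul_sum, Finset.mul_sum]
            refine Finset.sum_congr rfl fun i _ => ?_
            rw [← mul_comm (2 * k + 1) (k + i)]
          · congr 1
            rw [Finset.sum_comm]
            have : ∀ j, ∑ i ∈ Finset.Icc 1 m, q ^ (cW m k i * (k + j))
                = (m - 2 * k : ℕ) * q ^ ((2 * k + 1) * (k + j))
                  + 2 * ∑ i ∈ Finset.Icc 1 k, q ^ ((k + i) * (k + j)) :=
              fun j => sum_cW m k hk hm (fun a => q ^ (a * (k + j)))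
            rw [Finset.sum_congr rfl fun j _ => this j, Finset.sum_add_distrib,
              ← Finset.mul_sum, ← Finset.mul_sum, hGdef, hDdef]
            congr 1
            congr 1
            exact Finset.sum_comm
      _ = _ := by ring
  -- total sum as a subtraction
  have hTotal : ∑ i ∈ Finset.Icc 1 m, ∑ j ∈ Finset.Icc 1 n, (1 - q ^ (cW m k i * cW n k j))
      = (m * n : ℕ) - ∑ i ∈ Finset.Icc 1 m, ∑ j ∈ Finset.Icc 1 n, q ^ (cW m k i * cW n k j) := by
    rw [← Finset.sum_product' (f := fun i j => (1 : ENNReal) - q ^ (cW m k i * cW n k j)),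
      ← Finset.sum_product' (f := fun i j => q ^ (cW m k i * cW n k j)),
      sum_one_sub _ _ (fun p _ => pow_le_one₀ zero_le hqle)]
    congr 2
    rw [Finset.card_product, Nat.card_Icc, Nat.card_Icc]
    simp
  -- boundary fraction rewrites
  have hdivnetop : ∀ (a b : ENNReal), a ≠ ⊤ → b ≠ 0 → a / b ≠ ⊤ := by
    intro a b ha hb
    exact (ENNReal.div_lt_top ha hb).ne
  have h1 : (1 : ENNReal) - 2 * k / m = ((m - 2 * k : ℕ) : ENNReal) / m := by
    refine (ENNReal.eq_sub_of_add_eq (hdivnetop _ _ (ENNReal.mul_ne_top (by norm_num) (ENNReal.natCast_ne_top k)) hm0) ?_).symm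
    rw [ENNReal.div_add_div_same]
    have : ((m - 2 * k : ℕ) : ENNReal) + 2 * k = m := by
      rw [show ((2 : ENNReal) * k) = ((2 * k : ℕ) : ENNReal) by push_cast; ring,
        ← Nat.cast_add, Nat.cast_inj]
      omega
    rw [this, ENNReal.div_self hm0 hmt]
  have h2 : (1 : ENNReal) - 2 * k / n = ((n - 2 * k : ℕ) : ENNReal) / n := by
    refine (ENNReal.eq_sub_of_add_eq (hdivnetop _ _ (ENNReal.mul_ne_top (by norm_num) (ENNReal.natCast_ne_top k)) hn0) ?_).symm
    rw [ENNReal.div_add_div_same]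
    have : ((n - 2 * k : ℕ) : ENNReal) + 2 * k = n := by
      rw [show ((2 : ENNReal) * k) = ((2 * k : ℕ) : ENNReal) by push_cast; ring,
        ← Nat.cast_add, Nat.cast_inj]
      omega
    rw [this, ENNReal.div_self hn0 hnt]
  have hmn0 : (m : ENNReal) * n ≠ 0 := mul_ne_zero hm0 hn0
  have hmnt : (m : ENNReal) * n ≠ ⊤ := ENNReal.mul_ne_top hmt hnt
  have h3 : 1 / (m : ENNReal) + 1 / n - 4 * k / ((m : ENNReal) * n)
      = ((m + n - 4 * k : ℕ) : ENNReal) / ((m : ENNReal) * n) := by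
    have e1 : (1 : ENNReal) / m = (n : ENNReal) / ((m : ENNReal) * n) := by
      rw [div_eq_mul_inv, div_eq_mul_inv, ENNReal.mul_inv (Or.inl hm0) (Or.inl hmt), one_mul,
        mul_comm ((m : ENNReal))⁻¹ ((n : ENNReal))⁻¹, ← mul_assoc,
        ENNReal.mul_inv_cancel hn0 hnt, one_mul]
    have e2 : (1 : ENNReal) / n = (m : ENNReal) / ((m : ENNReal) * n) := by
      rw [div_eq_mul_inv, div_eq_mul_inv, ENNReal.mul_inv (Or.inl hm0) (Or.inl hmt), one_mul,
        ← mul_assoc, ENNReal.mul_inv_cancel hm0 hmt, one_mul]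
    rw [e1, e2, ENNReal.div_add_div_same]
    refine (ENNReal.eq_sub_of_add_eq (hdivnetop _ _ (ENNReal.mul_ne_top (by norm_num) (ENNReal.natCast_ne_top k)) hmn0) ?_).symm
    rw [ENNReal.div_add_div_same]
    congr 1
    rw [show ((4 : ENNReal) * k) = ((4 * k : ℕ) : ENNReal) by push_cast; ring,
      ← Nat.cast_add, ← Nat.cast_add, Nat.cast_inj]
    omega
  rw [h1, h2, h3, G_eq q hq1 k, ← hGdef]
  rw [hTotal, hTsum]
  have hsq : (2 * k + 1) * (2 * k + 1) = (2 * k + 1) ^ 2 := (sq (2 * k + 1)).symm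
  rw [hsq]
  set Q : ENNReal := q ^ ((2 * k + 1) ^ 2) with hQdef
  have hQle : Q ≤ 1 := pow_le_one₀ zero_le hqle
  have hGle : G ≤ (k : ENNReal) := by
    calc G ≤ ∑ i ∈ Finset.Icc 1 k, 1 :=
          Finset.sum_le_sum fun i _ => pow_le_one₀ zero_le hqle
      _ = (k : ENNReal) := by simp [Nat.card_Icc]
  have hDle : D ≤ (k : ENNReal) ^ 2 := by
    calc D ≤ ∑ i ∈ Finset.Icc 1 k, ∑ j ∈ Finset.Icc 1 k, 1 :=
          Finset.sum_le_sum fun i _ => Finset.sum_le_sum fun j _ =>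
            pow_le_one₀ zero_le hqle
      _ = (k : ENNReal) ^ 2 := by simp [Nat.card_Icc]; ring
  have hab : ∀ a b : ℕ, ((a : ENNReal) * b ≠ ⊤) :=
    fun a b => ENNReal.mul_ne_top (ENNReal.natCast_ne_top a) (ENNReal.natCast_ne_top b)
  have key : ((m * n : ℕ) : ENNReal)
        - ((m - 2 * k : ℕ) * ((n - 2 * k : ℕ) * Q + 2 * G) + 2 * ((n - 2 * k : ℕ) * G + 2 * D))
      = ((m - 2 * k : ℕ) : ENNReal) * ((n - 2 * k : ℕ) : ENNReal) * (1 - Q)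
        + 4 * ((k : ENNReal) ^ 2 - D) + 2 * ((m + n - 4 * k : ℕ) : ENNReal) * ((k : ENNReal) - G) := by
    have e1 : ((m - 2 * k : ℕ) : ENNReal) * ((n - 2 * k : ℕ) : ENNReal) * (1 - Q)
        = ((m - 2 * k : ℕ) : ENNReal) * (n - 2 * k : ℕ)
          - ((m - 2 * k : ℕ) : ENNReal) * (n - 2 * k : ℕ) * Q := by
      rw [ENNReal.mul_sub (fun _ _ => hab _ _), mul_one]
    have e2 : (4 : ENNReal) * ((k : ENNReal) ^ 2 - D) = 4 * (k : ENNReal) ^ 2 - 4 * D :=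
      ENNReal.mul_sub (fun _ _ => by norm_num)
    have e3 : (2 : ENNReal) * ((m + n - 4 * k : ℕ) : ENNReal) * ((k : ENNReal) - G)
        = 2 * ((m + n - 4 * k : ℕ) : ENNReal) * k
          - 2 * ((m + n - 4 * k : ℕ) : ENNReal) * G := by
      rw [ENNReal.mul_sub]
      intro _ _
      exact ENNReal.mul_ne_top (by norm_num) (ENNReal.natCast_ne_top _)
    have hb1 : ((m - 2 * k : ℕ) : ENNReal) * (n - 2 * k : ℕ) * Q ≠ ⊤ :=
      ne_top_of_le_ne_top (hab _ _) (mul_le_of_le_one_right' hQle)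
    have hb2 : (4 : ENNReal) * D ≠ ⊤ :=
      ne_top_of_le_ne_top
        (ENNReal.mul_ne_top (by norm_num) (ENNReal.pow_ne_top (ENNReal.natCast_ne_top k)))
        (mul_le_mul_right hDle 4)
    have hb3 : (2 : ENNReal) * ((m + n - 4 * k : ℕ) : ENNReal) * G ≠ ⊤ :=
      ne_top_of_le_ne_top
        (ENNReal.mul_ne_top (ENNReal.mul_ne_top (by norm_num) (ENNReal.natCast_ne_top _))
          (ENNReal.natCast_ne_top k))
        (mul_le_mul_right hGle _)
    rw [e1, e2, e3,
      ennreal_sub_add_sub _ _ _ _ (mul_le_of_le_one_right' hQle) (mul_le_mul_right hDle 4)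
        hb1 hb2,
      ennreal_sub_add_sub _ _ _ _
        (add_le_add (mul_le_of_le_one_right' hQle) (mul_le_mul_right hDle 4))
        (mul_le_mul_right hGle _) (by rw [Ne, ENNReal.add_eq_top]; tauto) hb3]
    congr 1
    · have hnat : (m - 2 * k) * (n - 2 * k) + 4 * k ^ 2 + 2 * (m + n - 4 * k) * k = m * n := by
        obtain ⟨a, ha⟩ : ∃ a, m = a + 2 * k := ⟨m - 2 * k, by omega⟩
        obtain ⟨b, hb⟩ : ∃ b, n = b + 2 * k := ⟨n - 2 * k, by omega⟩
        subst ha hb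
        have h1 : a + 2 * k - 2 * k = a := by omega
        have h2 : b + 2 * k - 2 * k = b := by omega
        have h3 : a + 2 * k + (b + 2 * k) - 4 * k = a + b := by omega
        rw [h1, h2, h3]
        ring
      calc ((m * n : ℕ) : ENNReal)
          = (((m - 2 * k) * (n - 2 * k) + 4 * k ^ 2 + 2 * (m + n - 4 * k) * k : ℕ) : ENNReal) := by
            rw [hnat]
        _ = _ := by push_cast; ring
    · have hc : ((m + n - 4 * k : ℕ) : ENNReal) = ((m - 2 * k : ℕ) : ENNReal) + (n - 2 * k : ℕ) := by
        rw [← Nat.cast_add, Nat.cast_inj]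
        omega
      rw [hc]
      ring
  rw [key]
  simp only [div_eq_mul_inv]
  rw [ENNReal.mul_inv (Or.inl hm0) (Or.inl hmt)]
  ring
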